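/- The rational function f(t) = (1+t)^3 (1+t+...+t^{n-1}) / (1 - 8t + 8t^{n+1} - t^{n+2}) satisfies f(1/t) = -f(t) for every integer n ≥ 1 (as an identity of rational functions in t). -/

import Mathlib

open Polynomial Finset

/-- The growth function `f(t) = (1+t)^3 (1+t+⋯+t^{n-1}) / (1 - 8t + 8t^{n+1} - t^{n+2})`
of the Coxeter group of the dodecahedron `D_n` is anti-reciprocal: `f(1/t) = -f(t)`,
as an identity of rational functions. -/
theorem stmt_0 (n : ℕ) (hn : 1 ≤ n) :
    let t : RatFunc ℚ := RatFunc.X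
    ((1 + t⁻¹) ^ 3 * (∑ i ∈ Finset.range n, (t⁻¹) ^ i)) /
        (1 - 8 * t⁻¹ + 8 * (t⁻¹) ^ (n + 1) - (t⁻¹) ^ (n + 2)) =
      -(((1 + t) ^ 3 * (∑ i ∈ Finset.range n, t ^ i)) /
        (1 - 8 * t + 8 * t ^ (n + 1) - t ^ (n + 2))) := by
  intro t
  have ht : t ≠ 0 := RatFunc.X_ne_zero
  obtain ⟨m, rfl⟩ : ∃ m, n = m + 1 := ⟨n - 1, by omega⟩
  have hS : (∑ i ∈ Finset.range (m + 1), (t⁻¹) ^ i)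
      = (t⁻¹) ^ m * ∑ i ∈ Finset.range (m + 1), t ^ i := by
    rw [Finset.mul_sum, ← Finset.sum_range_reflect (fun i => (t⁻¹) ^ m * t ^ i) (m + 1)]
    refine Finset.sum_congr rfl fun i hi => ?_
    have hi' : i ≤ m := by
      have := Finset.mem_range.mp hi; omega
    have hmi : m - i + i = m := by omega
    simp only [Nat.add_sub_cancel]
    rw [inv_pow, inv_pow, inv_mul_eq_div, eq_div_iff (pow_ne_zero m ht),
      inv_mul_eq_div, div_eq_iff (pow_ne_zero i ht), ← pow_add, hmi]
  have hb : (t⁻¹) ^ (m + 1 + 2) ≠ 0 := pow_ne_zero _ (inv_ne_zero ht)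
  have hnum : (1 + t⁻¹) ^ 3 * (∑ i ∈ Finset.range (m + 1), (t⁻¹) ^ i)
      = (t⁻¹) ^ (m + 1 + 2) *
        ((1 + t) ^ 3 * ∑ i ∈ Finset.range (m + 1), t ^ i) := by
    have h1 : (1 : RatFunc ℚ) + t⁻¹ = t⁻¹ * (1 + t) := by
      field_simp
      ring
    rw [hS, h1]
    ring
  have hden : (1 : RatFunc ℚ) - 8 * t⁻¹ + 8 * (t⁻¹) ^ (m + 1 + 1) - (t⁻¹) ^ (m + 1 + 2)
      = (t⁻¹) ^ (m + 1 + 2) *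
        (-(1 - 8 * t + 8 * t ^ (m + 1 + 1) - t ^ (m + 1 + 2))) := by
    have hu : t * t⁻¹ = 1 := mul_inv_cancel₀ ht
    have e1 : t ^ (m + 1 + 2) * (t⁻¹) ^ (m + 1 + 2) = 1 := by
      rw [← mul_pow, hu, one_pow]
    have e2 : t ^ (m + 1 + 1) * (t⁻¹) ^ (m + 1 + 2) = t⁻¹ := by
      rw [show m + 1 + 2 = (m + 1 + 1) + 1 by ring, pow_succ t⁻¹ (m + 1 + 1), ← mul_assoc, ← mul_pow, hu,
        one_pow, one_mul]
    have e3 : t * (t⁻¹) ^ (m + 1 + 2) = (t⁻¹) ^ (m + 1 + 1) := by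
      rw [show m + 1 + 2 = (m + 1 + 1) + 1 by ring, pow_succ' t⁻¹ (m + 1 + 1), ← mul_assoc, hu, one_mul]
    linear_combination (-1 : RatFunc ℚ) * e1 + 8 * e2 - 8 * e3
  rw [hnum, hden, mul_div_mul_left _ _ hb, div_neg]
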